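/- Let q > 0, q ≠ 1, and R_q = 2/(1-q) if 0 < q < 1, R_q = 2q/(q-1) if q > 1. Then for every real x with |x| < R_q/2: Cos_q(2x) = cos_q(x)·COS_q(x) − sin_q(x)·SIN_q(x) and Sin_q(2x) = sin_q(x)·COS_q(x) + cos_q(x)·SIN_q(x), where Sin_q, Cos_q are the improved q-trigonometric functions built from 𝓔_q(z) = ∑_{n=0}^∞ z^n/{n}_q!, and sin_q, cos_q, SIN_q, COS_q are the standard q-trigonometric functions built from e_q(z) = ∑_{n=0}^∞ z^n/[n]_q! and E_q(z) = ∑_{n=0}^∞ q^{n(n-1)/2} z^n/[n]_q!. -/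

import Mathlib

/-- The q-integer `[k]_q = 1 + q + q^2 + ⋯ + q^(k-1)`. -/
noncomputable def qInt (q : ℝ) (k : ℕ) : ℝ := ∑ i ∈ Finset.range k, q ^ i

/-- The q-factorial `[n]_q! = [1]_q [2]_q ⋯ [n]_q`, with `[0]_q! = 1`. -/
noncomputable def qFact (q : ℝ) (n : ℕ) : ℝ := ∏ k ∈ Finset.range n, qInt q (k + 1)

/-- The symbol `{n}_q = 2(1-q^n)/((1-q)(1+q^(n-1)))` (for `n ≥ 1`). -/
noncomputable def qBrace (q : ℝ) (n : ℕ) : ℝ :=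
  2 * (1 - q ^ n) / ((1 - q) * (1 + q ^ (n - 1)))

/-- The factorial `{n}_q! = {1}_q {2}_q ⋯ {n}_q`, with `{0}_q! = 1`. -/
noncomputable def qBraceFact (q : ℝ) (n : ℕ) : ℝ := ∏ k ∈ Finset.range n, qBrace q (k + 1)

/-- The radius `R_q = 2/(1-q)` for `0 < q < 1` and `R_q = 2q/(q-1)` for `q > 1`. -/
noncomputable def Rq (q : ℝ) : ℝ := if q < 1 then 2 / (1 - q) else 2 * q / (q - 1)

/-- The first q-exponential `e_q(z) = ∑_{n=0}^∞ z^n/[n]_q!`. -/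
noncomputable def qExp (q : ℝ) (z : ℂ) : ℂ := ∑' n : ℕ, z ^ n / (qFact q n : ℂ)

/-- The second q-exponential `E_q(z) = ∑_{n=0}^∞ q^(n(n-1)/2) z^n/[n]_q!`. -/
noncomputable def qExp' (q : ℝ) (z : ℂ) : ℂ :=
  ∑' n : ℕ, (q : ℂ) ^ (n * (n - 1) / 2) * z ^ n / (qFact q n : ℂ)

/-- The improved q-exponential function `𝓔_q(z) = ∑_{n=0}^∞ z^n/{n}_q!`. -/
noncomputable def impExp (q : ℝ) (z : ℂ) : ℂ := ∑' n : ℕ, z ^ n / (qBraceFact q n : ℂ)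

/-- The standard q-sine `sin_q(x) = (e_q(ix) − e_q(−ix))/(2i)`. -/
noncomputable def qSin (q : ℝ) (x : ℝ) : ℂ :=
  (qExp q (Complex.I * x) - qExp q (-(Complex.I * x))) / (2 * Complex.I)

/-- The standard q-cosine `cos_q(x) = (e_q(ix) + e_q(−ix))/2`. -/
noncomputable def qCos (q : ℝ) (x : ℝ) : ℂ :=
  (qExp q (Complex.I * x) + qExp q (-(Complex.I * x))) / 2

/-- The standard q-sine `Sin_q(x) = (E_q(ix) − E_q(−ix))/(2i)`. -/
noncomputable def qSin' (q : ℝ) (x : ℝ) : ℂ :=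
  (qExp' q (Complex.I * x) - qExp' q (-(Complex.I * x))) / (2 * Complex.I)

/-- The standard q-cosine `Cos_q(x) = (E_q(ix) + E_q(−ix))/2`. -/
noncomputable def qCos' (q : ℝ) (x : ℝ) : ℂ :=
  (qExp' q (Complex.I * x) + qExp' q (-(Complex.I * x))) / 2

/-- The improved q-sine `Sin_q(x) = (𝓔_q(ix) − 𝓔_q(−ix))/(2i)`. -/
noncomputable def impSin (q : ℝ) (x : ℝ) : ℂ :=
  (impExp q (Complex.I * x) - impExp q (-(Complex.I * x))) / (2 * Complex.I)

/-- The improved q-cosine `Cos_q(x) = (𝓔_q(ix) + 𝓔_q(−ix))/2`. -/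
noncomputable def impCos (q : ℝ) (x : ℝ) : ℂ :=
  (impExp q (Complex.I * x) + impExp q (-(Complex.I * x))) / 2


section aux
variable {q : ℝ}

lemma tri_succ (j : ℕ) : (j+1)*j/2 = j*(j-1)/2 + j := by
  rcases j with _|i
  · simp
  · obtain ⟨c, hc⟩ := Nat.even_mul_succ_self i
    have e1 : (i+1)*i = 2*c := by rw [mul_comm]; omega
    have e2 : (i+1+1)*(i+1) = 2*(c+i+1) := by
      rw [show (i+1+1)*(i+1) = (i+1)*i + 2*(i+1) from by ring, e1]; ring
    simp only [Nat.add_sub_cancel]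
    rw [e2, e1]
    omega

lemma qInt_pos (hq : 0 < q) (k : ℕ) : 0 < qInt q (k+1) :=
  Finset.sum_pos (fun i _ => pow_pos hq i) (by simp)

lemma qFact_pos (hq : 0 < q) (n : ℕ) : 0 < qFact q n :=
  Finset.prod_pos fun k _ => qInt_pos hq k

lemma qFact_succ (n : ℕ) : qFact q (n+1) = qFact q n * qInt q (n+1) :=
  Finset.prod_range_succ _ n

lemma qInt_add (a b : ℕ) : qInt q (a+b) = qInt q a + q^a * qInt q b := by
  simp [qInt, Finset.sum_range_add, pow_add, Finset.mul_sum]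

lemma qInt_mul (hq1 : q ≠ 1) (k : ℕ) : qInt q k * (1 - q) = 1 - q^k := by
  have := geom_sum_eq hq1 k
  rw [qInt, this]
  have : q - 1 ≠ 0 := sub_ne_zero.mpr hq1
  field_simp
  ring

noncomputable def gb (q : ℝ) : ℕ → ℕ → ℝ
  | 0, 0 => 1
  | 0, _+1 => 0
  | _+1, 0 => 1
  | n+1, k+1 => gb q n (k+1) + q^(n-k) * gb q n k

lemma gb_zero (n : ℕ) : gb q n 0 = 1 := by cases n <;> simp [gb]

lemma gb_eq_zero : ∀ n k, n < k → gb q n k = 0 := by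
  intro n
  induction n with
  | zero => intro k hk; rcases k with _|k; · omega
            simp [gb]
  | succ m ih =>
    intro k hk
    rcases k with _|k
    · omega
    simp only [gb]
    rw [ih _ (by omega), ih _ (by omega)]
    ring

lemma gb_diag : ∀ n, gb q n n = 1 := by
  intro n
  induction n with
  | zero => simp [gb]
  | succ m ih =>
    simp only [gb]
    rw [gb_eq_zero m (m+1) (by omega), ih]
    simp

lemma gb_mul : ∀ n k, k ≤ n → gb q n k * (qFact q k * qFact q (n - k)) = qFact q n := by
  intro n
  induction n with
  | zero => intro k hk; interval_cases k; simp [gb, qFact]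
  | succ n ih =>
    intro k hk
    rcases k with _|j
    · simp [gb_zero, qFact]
    rcases eq_or_lt_of_le hk with h | h
    · rw [← h]
      simp only [Nat.sub_self, gb_diag]
      simp [qFact]
    have hj : j + 1 ≤ n := by omega
    obtain ⟨m, hm⟩ : ∃ m, n - j = m + 1 := ⟨n - j - 1, by omega⟩
    have hm2 : n - (j+1) = m := by omega
    have hmn : (m+1) + (j+1) = n + 1 := by omega
    simp only [gb, show n + 1 - (j+1) = m + 1 from by omega, hm]
    have IH1 := ih (j+1) hj
    rw [hm2, qFact_succ j] at IH1
    have IH2 := ih j (by omega)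
    rw [hm, qFact_succ m] at IH2
    have key := qInt_add (q := q) (m+1) (j+1)
    rw [hmn] at key
    rw [qFact_succ n, qFact_succ m, qFact_succ j, key]
    linear_combination qInt q (m+1) * IH1 + q^(m+1) * qInt q (j+1) * IH2


lemma gauss (q : ℝ) : ∀ n, ∑ k ∈ Finset.range (n+1), q^(k*(k-1)/2) * gb q n k
    = ∏ j ∈ Finset.range n, (1 + q^j) := by
  intro n
  induction n with
  | zero => simp [gb]
  | succ n ih =>
    rw [Finset.sum_range_succ' (fun k => q^(k*(k-1)/2) * gb q (n+1) k)]
    simp only [gb, Nat.add_sub_cancel, gb_zero, Nat.zero_sub, pow_zero, mul_one, one_mul]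
    have split : ∑ j ∈ Finset.range (n+1), q^((j+1)*j/2) * (gb q n (j+1) + q^(n-j) * gb q n j)
        = (∑ j ∈ Finset.range (n+1), q^((j+1)*j/2) * gb q n (j+1))
          + q^n * ∑ j ∈ Finset.range (n+1), q^(j*(j-1)/2) * gb q n j := by
      rw [Finset.mul_sum, ← Finset.sum_add_distrib]
      refine Finset.sum_congr rfl fun j hj => ?_
      have hjn : j ≤ n := Finset.mem_range_succ_iff.mp hj
      have hexp : (j+1)*j/2 + (n-j) = n + j*(j-1)/2 := by
        rw [tri_succ]
        generalize j*(j-1)/2 = t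
        omega
      rw [mul_add, ← mul_assoc, ← pow_add, hexp, pow_add]
      ring
    rw [split]
    have repack : (∑ j ∈ Finset.range (n+1), q^((j+1)*j/2) * gb q n (j+1)) + 1
        = ∑ k ∈ Finset.range (n+1), q^(k*(k-1)/2) * gb q n k := by
      have t1 := Finset.sum_range_succ' (fun k => q^(k*(k-1)/2) * gb q n k) (n+1)
      rw [Finset.sum_range_succ (fun k => q^(k*(k-1)/2) * gb q n k) (n+1)] at t1
      simp only [Nat.add_sub_cancel, gb_eq_zero n (n+1) (by omega), mul_zero, add_zero,
        gb_zero, mul_one, Nat.zero_sub, Nat.mul_zero, Nat.zero_mul, Nat.zero_div, pow_zero] at t1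
      linarith [t1]
    rw [Finset.prod_range_succ]
    norm_num
    linear_combination repack + (1+q^n) * ih

lemma qBraceFact_eq (hq : 0 < q) (hq1 : q ≠ 1) (n : ℕ) :
    (∏ j ∈ Finset.range n, (1 + q^j)) * qBraceFact q n = 2^n * qFact q n := by
  rw [qBraceFact, qFact, ← Finset.prod_mul_distrib]
  rw [show (2:ℝ)^n = ∏ _j ∈ Finset.range n, (2:ℝ) from by simp, ← Finset.prod_mul_distrib]
  refine Finset.prod_congr rfl fun k _ => ?_
  have h1 : (0:ℝ) < 1 + q^k := by positivity
  have h2 : (1:ℝ) - q ≠ 0 := sub_ne_zero.mpr (Ne.symm hq1)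
  have hgeom := qInt_mul (q := q) hq1 (k+1)
  rw [qBrace]
  simp only [Nat.add_sub_cancel]
  rw [← hgeom]
  field_simp
lemma prod_one_add_pow_pos (hq : 0 < q) (n : ℕ) : 0 < ∏ j ∈ Finset.range n, (1 + q^j) :=
  Finset.prod_pos fun j _ => by positivity

lemma qBraceFact_pos (hq : 0 < q) (hq1 : q ≠ 1) (n : ℕ) : 0 < qBraceFact q n := by
  have h := qBraceFact_eq hq hq1 n
  have hP := prod_one_add_pow_pos hq n
  have hF := qFact_pos hq n
  have h2 : (0:ℝ) < 2^n := by positivity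
  nlinarith [mul_pos h2 hF]

lemma keyR (hq : 0 < q) (hq1 : q ≠ 1) (n : ℕ) :
    ∑ l ∈ Finset.range (n+1), q^(l*(l-1)/2) / (qFact q (n-l) * qFact q l)
      = 2^n / qBraceFact q n := by
  have hF := qFact_pos hq n
  have hB := qBraceFact_pos hq hq1 n
  have hP := prod_one_add_pow_pos hq n
  have step : ∀ l ∈ Finset.range (n+1),
      q^(l*(l-1)/2) / (qFact q (n-l) * qFact q l)
        = q^(l*(l-1)/2) * gb q n l / qFact q n := by
    intro l hl
    have hln : l ≤ n := Finset.mem_range_succ_iff.mp hl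
    have hgb := gb_mul (q := q) n l hln
    have h1 : qFact q (n-l) * qFact q l ≠ 0 :=
      (mul_pos (qFact_pos hq _) (qFact_pos hq _)).ne'
    rw [div_eq_div_iff h1 hF.ne']
    linear_combination (-(q^(l*(l-1)/2))) * hgb
  rw [Finset.sum_congr rfl step, ← Finset.sum_div, gauss q n]
  rw [div_eq_div_iff hF.ne' hB.ne']
  linear_combination qBraceFact_eq hq hq1 n

lemma qInt_closed (hq1 : q ≠ 1) (k : ℕ) : qInt q k = (1 - q^k)/(1-q) := by
  have h : (1:ℝ) - q ≠ 0 := sub_ne_zero.mpr (Ne.symm hq1)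
  rw [eq_div_iff h]
  exact qInt_mul hq1 k

open Filter Topology in
lemma tendsto_ratio_e (hq : 0 < q) (hq1 : q ≠ 1) (r : ℝ) :
    Tendsto (fun n : ℕ => r / qInt q (n+1)) atTop
      (𝓝 (if q < 1 then r * (1-q) else 0)) := by
  rcases lt_or_gt_of_ne hq1 with hlt | hgt
  · rw [if_pos hlt]
    have hq1' : (0:ℝ) < 1 - q := by linarith
    have hform : ∀ n : ℕ, r / qInt q (n+1) = r*(1-q) / (1 - q^(n+1)) := by
      intro n
      rw [qInt_closed hq1]
      have hpow : q^(n+1) < 1 := pow_lt_one₀ hq.le hlt (by omega)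
      rw [div_div_eq_mul_div]
    have hp : Tendsto (fun n : ℕ => q^(n+1)) atTop (𝓝 0) :=
      (tendsto_pow_atTop_nhds_zero_of_lt_one hq.le hlt).comp (tendsto_add_atTop_nat 1)
    have hT : Tendsto (fun n : ℕ => r*(1-q) / (1 - q^(n+1))) atTop (𝓝 (r*(1-q)/(1-0))) :=
      tendsto_const_nhds.div (tendsto_const_nhds.sub hp) (by norm_num)
    rw [sub_zero, div_one] at hT
    exact hT.congr fun n => (hform n).symm
  · rw [if_neg (by linarith)]
    have hup : Tendsto (fun n : ℕ => qInt q (n+1)) atTop atTop := by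
      apply tendsto_atTop_mono (f := fun n : ℕ => (n:ℝ)+1)
      · intro n
        calc ((n:ℝ)+1) = ∑ _i ∈ Finset.range (n+1), (1:ℝ) := by simp
          _ ≤ ∑ i ∈ Finset.range (n+1), q^i :=
            Finset.sum_le_sum fun i _ => one_le_pow₀ (by linarith)
          _ = qInt q (n+1) := rfl
      · exact tendsto_atTop_add_const_right atTop 1 tendsto_natCast_atTop_atTop
    exact Tendsto.div_atTop tendsto_const_nhds hup

open Filter Topology in
lemma tendsto_ratio_E (hq : 0 < q) (hq1 : q ≠ 1) (r : ℝ) :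
    Tendsto (fun n : ℕ => q^n * r / qInt q (n+1)) atTop
      (𝓝 (if q < 1 then 0 else r * (q-1) / q)) := by
  rcases lt_or_gt_of_ne hq1 with hlt | hgt
  · rw [if_pos hlt]
    have h1 : Tendsto (fun n : ℕ => q^n) atTop (𝓝 0) :=
      tendsto_pow_atTop_nhds_zero_of_lt_one hq.le hlt
    have h2 := tendsto_ratio_e hq hq1 r
    have := h1.mul h2
    rw [zero_mul] at this
    exact this.congr fun n => by ring
  · rw [if_neg (by linarith)]
    have hq0 : q ≠ 0 := hq.ne'
    have hform : ∀ n : ℕ, q^n * r / qInt q (n+1) = (r*(q-1)/q) / (1 - (q⁻¹)^(n+1)) := by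
      intro n
      rw [qInt_closed hq1, inv_pow]
      have hpow : 1 < q^(n+1) := one_lt_pow₀ hgt (by omega)
      have h3 : q^(n+1) - 1 ≠ 0 := by linarith
      have h3' : (1:ℝ) - q^(n+1) ≠ 0 := by intro h; apply h3; linarith
      have h4 : (1:ℝ) - q ≠ 0 := by intro h; exact hq1 (by linarith)
      have h5 : q^(n+1) ≠ 0 := pow_ne_zero _ hq0
      field_simp
      ring
    have hp : Tendsto (fun n : ℕ => (q⁻¹)^(n+1)) atTop (𝓝 0) :=
      (tendsto_pow_atTop_nhds_zero_of_lt_one (by positivity) (inv_lt_one_of_one_lt₀ hgt)).comp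
        (tendsto_add_atTop_nat 1)
    have hT : Tendsto (fun n : ℕ => (r*(q-1)/q) / (1 - (q⁻¹)^(n+1))) atTop
        (𝓝 ((r*(q-1)/q)/(1-0))) :=
      tendsto_const_nhds.div (tendsto_const_nhds.sub hp) (by norm_num)
    rw [sub_zero, div_one] at hT
    exact hT.congr fun n => (hform n).symm

lemma summable_e (hq : 0 < q) (hq1 : q ≠ 1) {r : ℝ} (hr0 : 0 < r) (hr : r < Rq q / 2) :
    Summable (fun n => r^n / qFact q n) := by
  have hpos : ∀ n, 0 < r^n / qFact q n := fun n => div_pos (pow_pos hr0 n) (qFact_pos hq n)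
  have hratio : ∀ n : ℕ, ‖r^(n+1)/qFact q (n+1)‖ / ‖r^n/qFact q n‖ = r / qInt q (n+1) := by
    intro n
    rw [Real.norm_of_nonneg (hpos _).le, Real.norm_of_nonneg (hpos _).le, qFact_succ]
    have h1 := (qFact_pos hq n).ne'
    have h2 := (qInt_pos hq n).ne'
    field_simp
    ring
  have hlt1 : (if q < 1 then r * (1-q) else 0) < 1 := by
    split_ifs with h
    · rw [Rq, if_pos h] at hr
      have h1 : (0:ℝ) < 1 - q := by linarith
      rw [show 2 / (1-q) / 2 = 1/(1-q) from by ring, lt_div_iff₀ h1] at hr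
      linarith
    · norm_num
  exact summable_of_ratio_test_tendsto_lt_one hlt1
    (Filter.Eventually.of_forall fun n => (hpos n).ne')
    (((tendsto_ratio_e hq hq1 r).congr fun n => (hratio n).symm))

lemma summable_E (hq : 0 < q) (hq1 : q ≠ 1) {r : ℝ} (hr0 : 0 < r) (hr : r < Rq q / 2) :
    Summable (fun n => q^(n*(n-1)/2) * r^n / qFact q n) := by
  have hpos : ∀ n, 0 < q^(n*(n-1)/2) * r^n / qFact q n :=
    fun n => div_pos (mul_pos (pow_pos hq _) (pow_pos hr0 n)) (qFact_pos hq n)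
  have hratio : ∀ n : ℕ, ‖q^((n+1)*((n+1)-1)/2) * r^(n+1)/qFact q (n+1)‖ /
      ‖q^(n*(n-1)/2) * r^n/qFact q n‖ = q^n * r / qInt q (n+1) := by
    intro n
    rw [Real.norm_of_nonneg (hpos _).le, Real.norm_of_nonneg (hpos _).le, qFact_succ]
    simp only [Nat.add_sub_cancel]
    rw [tri_succ, pow_add]
    have h1 := (qFact_pos hq n).ne'
    have h2 := (qInt_pos hq n).ne'
    have h3 : q^(n*(n-1)/2) ≠ 0 := pow_ne_zero _ hq.ne'
    field_simp
    ring
  have hlt1 : (if q < 1 then 0 else r * (q-1) / q) < 1 := by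
    split_ifs with h
    · norm_num
    · have hgt : 1 < q := lt_of_le_of_ne (not_lt.mp h) (Ne.symm hq1)
      rw [Rq, if_neg h] at hr
      have h1 : (0:ℝ) < q - 1 := by linarith
      rw [show 2*q/(q-1)/2 = q/(q-1) from by ring, lt_div_iff₀ h1] at hr
      rw [div_lt_one hq]
      linarith
  exact summable_of_ratio_test_tendsto_lt_one hlt1
    (Filter.Eventually.of_forall fun n => (hpos n).ne')
    (((tendsto_ratio_E hq hq1 r).congr fun n => (hratio n).symm))

lemma impExp_eq (hq : 0 < q) (hq1 : q ≠ 1) (z : ℂ) (hz : ‖z‖ < Rq q / 2) :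
    impExp q (2*z) = qExp q z * qExp' q z := by
  by_cases hz0 : z = 0
  · subst hz0
    rw [impExp, qExp, qExp']
    rw [tsum_eq_single 0 (fun n hn => by simp [zero_pow hn]),
        tsum_eq_single 0 (fun n hn => by simp [zero_pow hn]),
        tsum_eq_single 0 (fun n hn => by simp [zero_pow hn])]
    simp [qFact, qBraceFact]
  · have hr0 : 0 < ‖z‖ := norm_pos_iff.mpr hz0
    have hf : Summable (fun n => ‖z^n / (qFact q n : ℂ)‖) := by
      refine (summable_e hq hq1 hr0 hz).congr fun n => ?_
      simp only [norm_div, norm_pow, Complex.norm_real, Real.norm_eq_abs,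
        abs_of_pos (qFact_pos hq n)]
    have hg : Summable (fun n => ‖(q:ℂ)^(n*(n-1)/2) * z^n / (qFact q n : ℂ)‖) := by
      refine (summable_E hq hq1 hr0 hz).congr fun n => ?_
      simp only [norm_div, norm_mul, norm_pow, Complex.norm_real, Real.norm_eq_abs,
        abs_of_pos (qFact_pos hq n), abs_of_pos hq]
    rw [qExp, qExp', tsum_mul_tsum_eq_tsum_sum_antidiagonal_of_summable_norm hf hg, impExp]
    refine tsum_congr fun n => ?_
    rw [Finset.Nat.sum_antidiagonal_eq_sum_range_succ
      (fun k l => z^k / (qFact q k : ℂ) * ((q:ℂ)^(l*(l-1)/2) * z^l / (qFact q l : ℂ)))]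
    have hcast : ∀ k ∈ Finset.range (n+1),
        z^k / (qFact q k : ℂ) * ((q:ℂ)^((n-k)*((n-k)-1)/2) * z^(n-k) / (qFact q (n-k) : ℂ))
        = z^n * ((q^((n-k)*((n-k)-1)/2) / (qFact q (n-(n-k)) * qFact q (n-k)) : ℝ) : ℂ) := by
      intro k hk
      have hk' : k ≤ n := Finset.mem_range_succ_iff.mp hk
      rw [show n - (n-k) = k from by omega]
      have h1 : (qFact q k : ℂ) ≠ 0 := by
        exact_mod_cast (qFact_pos hq k).ne'
      have h2 : (qFact q (n-k) : ℂ) ≠ 0 := by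
        exact_mod_cast (qFact_pos hq (n-k)).ne'
      rw [show z^n = z^k * z^(n-k) from by rw [← pow_add]; congr 1; omega]
      push_cast
      field_simp
    rw [Finset.sum_congr rfl hcast, ← Finset.mul_sum, ← Complex.ofReal_sum]
    have hrefl := Finset.sum_range_reflect
      (fun l => q^(l*(l-1)/2) / (qFact q (n-l) * qFact q l)) (n+1)
    simp only [Nat.add_sub_cancel] at hrefl
    rw [hrefl]
    rw [keyR hq hq1 n]
    have hB : (qBraceFact q n : ℂ) ≠ 0 := by
      exact_mod_cast (qBraceFact_pos hq hq1 n).ne'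
    push_cast
    rw [mul_pow]
    field_simp


/-- For `|x| < R_q/2`: `Cos_q(2x) = cos_q(x)·Cos_q(x) − sin_q(x)·Sin_q(x)` and
`Sin_q(2x) = sin_q(x)·Cos_q(x) + cos_q(x)·Sin_q(x)`. -/
theorem improved_qTrig_double_angle (q : ℝ) (hq : 0 < q) (hq1 : q ≠ 1) (x : ℝ)
    (hx : |x| < Rq q / 2) :
    impCos q (2 * x) = qCos q x * qCos' q x - qSin q x * qSin' q x ∧
    impSin q (2 * x) = qSin q x * qCos' q x + qCos q x * qSin' q x := by
  have hzx : ‖Complex.I * (x:ℂ)‖ < Rq q / 2 := by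
    rw [norm_mul, Complex.norm_I, one_mul, Complex.norm_real, Real.norm_eq_abs]; exact hx
  have hzx' : ‖-(Complex.I * (x:ℂ))‖ < Rq q / 2 := by rwa [norm_neg]
  have h1 : impExp q (Complex.I * ((2*x:ℝ):ℂ))
      = qExp q (Complex.I*x) * qExp' q (Complex.I*x) := by
    rw [show (Complex.I * ((2*x:ℝ):ℂ)) = 2 * (Complex.I * (x:ℂ)) from by push_cast; ring]
    exact impExp_eq hq hq1 _ hzx
  have h2 : impExp q (-(Complex.I * ((2*x:ℝ):ℂ)))
      = qExp q (-(Complex.I*x)) * qExp' q (-(Complex.I*x)) := by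
    rw [show (-(Complex.I * ((2*x:ℝ):ℂ))) = 2 * (-(Complex.I * (x:ℂ))) from by push_cast; ring]
    exact impExp_eq hq hq1 _ hzx'
  have cosId : ∀ A B C D : ℂ, (A*C + B*D)/2
      = (A+B)/2 * ((C+D)/2) - (A-B)/(2*Complex.I) * ((C-D)/(2*Complex.I)) := by
    intro A B C D
    have hI := Complex.I_ne_zero
    field_simp
    linear_combination (A*C + B*D - A*D - B*C) * Complex.I_sq
  have sinId : ∀ A B C D : ℂ, (A*C - B*D)/(2*Complex.I)
      = (A-B)/(2*Complex.I) * ((C+D)/2) + (A+B)/2 * ((C-D)/(2*Complex.I)) := by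
    intro A B C D
    have hI := Complex.I_ne_zero
    field_simp
    ring_nf
  constructor
  · rw [impCos, qCos, qCos', qSin, qSin', h1, h2]
    exact cosId _ _ _ _
  · rw [impSin, qSin, qCos', qCos, qSin', h1, h2]
    exact sinId _ _ _ _

end aux
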